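/- arXiv:1203.2126 — 5 statements merged into one kernel-verified Lean document; each statement's English description precedes it below -/
import Mathlib

section
/- Algebraic inequality for negative powers: Let q > 0, q ≠ 1, and a,b > 0. Then (b−a)(a^{−q} − b^{−q}) ≥ (4q/(1−q)²) ( b^{(1−q)/2} − a^{(1−q)/2} )². -/
open Real Set

private lemma hasDerivAt_haux (s : ℝ) {t : ℝ} (ht : 0 < t) :
    HasDerivAt (fun x : ℝ => x ^ s + x ^ (2 - s) - x ^ (2:ℕ) - 1 - s * (s - 2) * (x - 1) ^ 2)
      (s * t ^ (s - 1) + (2 - s) * t ^ (1 - s) - 2 * t - s * (s - 2) * (2 * (t - 1))) t := by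
  have h1 := Real.hasDerivAt_rpow_const (x := t) (p := s) (Or.inl ht.ne')
  have h2 := Real.hasDerivAt_rpow_const (x := t) (p := 2 - s) (Or.inl ht.ne')
  have h3 : HasDerivAt (fun x : ℝ => x ^ (2:ℕ)) (2 * t) t := by
    simpa using hasDerivAt_pow 2 t
  have h5 : HasDerivAt (fun x : ℝ => x - 1) 1 t := (hasDerivAt_id t).sub_const 1
  have h4 : HasDerivAt (fun x : ℝ => (x - 1) ^ 2) (2 * (t - 1)) t := by
    have h := h5.pow 2
    norm_num at h
    exact h
  have h := (((h1.add h2).sub h3).sub_const 1).sub (h4.const_mul (s * (s - 2)))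
  convert h using 1
  · rfl
  · rfl
  · rfl
  have e : 2 - s - 1 = 1 - s := by ring
  rw [e]

private lemma hasDerivAt_gaux (s : ℝ) {t : ℝ} (ht : 0 < t) :
    HasDerivAt (fun x : ℝ => s * x ^ (s - 1) + (2 - s) * x ^ (1 - s) - 2 * x
        - s * (s - 2) * (2 * (x - 1)))
      (s * (s - 1) * t ^ (s - 2) + (s - 1) * (s - 2) * t ^ (-s) - 2 * (s - 1) ^ 2) t := by
  have h1 := (Real.hasDerivAt_rpow_const (x := t) (p := s - 1) (Or.inl ht.ne')).const_mul s
  have h2 := (Real.hasDerivAt_rpow_const (x := t) (p := 1 - s) (Or.inl ht.ne')).const_mul (2 - s)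
  have h3 : HasDerivAt (fun x : ℝ => 2 * x) 2 t := by simpa using (hasDerivAt_id t).const_mul 2
  have h4 : HasDerivAt (fun x : ℝ => s * (s - 2) * (2 * (x - 1))) (s * (s - 2) * 2) t := by
    simpa using (((hasDerivAt_id t).sub_const 1).const_mul 2).const_mul (s * (s - 2))
  have h := ((h1.add h2).sub h3).sub h4
  convert h using 1
  · rfl
  · rfl
  · rfl
  have e1 : s - 1 - 1 = s - 2 := by ring
  have e2 : 1 - s - 1 = -s := by ring
  rw [e1, e2]; ring

private lemma gpp_nonneg {s t : ℝ} (hs : s < 0 ∨ 2 < s) (ht : 0 < t) :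
    0 ≤ s * (s - 1) * t ^ (s - 2) + (s - 1) * (s - 2) * t ^ (-s) - 2 * (s - 1) ^ 2 := by
  have hA : 0 < s * (s - 1) := by rcases hs with h | h <;> nlinarith
  have hB : 0 < (s - 1) * (s - 2) := by rcases hs with h | h <;> nlinarith
  have hAB : 0 < s * (s - 1) + (s - 1) * (s - 2) := by linarith
  have hw : s * (s - 1) / (s * (s - 1) + (s - 1) * (s - 2))
      + (s - 1) * (s - 2) / (s * (s - 1) + (s - 1) * (s - 2)) = 1 := by
    rw [← add_div, div_self hAB.ne']
  have h1 : 0 ≤ t ^ (s - 2) := (Real.rpow_pos_of_pos ht _).le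
  have h2 : 0 ≤ t ^ (-s) := (Real.rpow_pos_of_pos ht _).le
  have key := Real.geom_mean_le_arith_mean2_weighted
    (div_nonneg hA.le hAB.le) (div_nonneg hB.le hAB.le) h1 h2 hw
  have hgeom : (t ^ (s - 2)) ^ (s * (s - 1) / (s * (s - 1) + (s - 1) * (s - 2)))
      * (t ^ (-s)) ^ ((s - 1) * (s - 2) / (s * (s - 1) + (s - 1) * (s - 2))) = 1 := by
    rw [← Real.rpow_mul ht.le, ← Real.rpow_mul ht.le, ← Real.rpow_add ht]
    have : (s - 2) * (s * (s - 1) / (s * (s - 1) + (s - 1) * (s - 2)))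
        + (-s) * ((s - 1) * (s - 2) / (s * (s - 1) + (s - 1) * (s - 2))) = 0 := by
      field_simp
      ring
    rw [this, Real.rpow_zero]
  rw [hgeom] at key
  rw [div_mul_eq_mul_div, div_mul_eq_mul_div, ← add_div, le_div_iff₀ hAB, one_mul] at key
  nlinarith [key]

private lemma core_ineq (s : ℝ) (hs : s < 0 ∨ 2 < s) {t : ℝ} (ht : 0 < t) :
    s * (s - 2) * (t - 1) ^ 2 ≤ (t ^ s - 1) * (1 - t ^ (2 - s)) := by
  set h : ℝ → ℝ := fun x => x ^ s + x ^ (2 - s) - x ^ (2:ℕ) - 1 - s * (s - 2) * (x - 1) ^ 2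
    with hdef
  set g : ℝ → ℝ := fun x => s * x ^ (s - 1) + (2 - s) * x ^ (1 - s) - 2 * x
      - s * (s - 2) * (2 * (x - 1)) with gdef
  have hg_mono : MonotoneOn g (Ioi 0) := by
    apply monotoneOn_of_deriv_nonneg (convex_Ioi 0)
    · exact fun x hx => (hasDerivAt_gaux s hx).continuousAt.continuousWithinAt
    · intro x hx
      rw [interior_Ioi] at hx
      exact (hasDerivAt_gaux s hx).differentiableAt.differentiableWithinAt
    · intro x hx
      rw [interior_Ioi] at hx
      rw [(hasDerivAt_gaux s hx).deriv]
      exact gpp_nonneg hs hx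
  have hg1 : g 1 = 0 := by simp [gdef]
  have hcont : ∀ x ∈ Ioi (0:ℝ), ContinuousAt h x := fun x hx =>
    (hasDerivAt_haux s hx).continuousAt
  have hmono : MonotoneOn h (Ici 1) := by
    apply monotoneOn_of_deriv_nonneg (convex_Ici 1)
    · exact fun x hx => (hcont x (mem_Ioi.2 (lt_of_lt_of_le zero_lt_one (mem_Ici.1 hx)))).continuousWithinAt
    · intro x hx
      rw [interior_Ici] at hx
      exact (hasDerivAt_haux s (lt_trans zero_lt_one hx)).differentiableAt.differentiableWithinAt
    · intro x hx
      rw [interior_Ici] at hx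
      rw [(hasDerivAt_haux s (lt_trans zero_lt_one hx)).deriv]
      have := hg_mono (mem_Ioi.2 zero_lt_one) (mem_Ioi.2 (lt_trans zero_lt_one hx)) hx.le
      rw [hg1] at this
      exact this
  have hanti : AntitoneOn h (Ioc 0 1) := by
    apply antitoneOn_of_deriv_nonpos (convex_Ioc 0 1)
    · exact fun x hx => (hcont x hx.1).continuousWithinAt
    · intro x hx
      rw [interior_Ioc] at hx
      exact (hasDerivAt_haux s hx.1).differentiableAt.differentiableWithinAt
    · intro x hx
      rw [interior_Ioc] at hx
      rw [(hasDerivAt_haux s hx.1).deriv]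
      have := hg_mono (mem_Ioi.2 hx.1) (mem_Ioi.2 zero_lt_one) hx.2.le
      rw [hg1] at this
      exact this
  have h1 : h 1 = 0 := by simp [hdef]
  have hpos : 0 ≤ h t := by
    rcases le_total t 1 with hle | hle
    · have := hanti (mem_Ioc.2 ⟨ht, hle⟩) (mem_Ioc.2 ⟨zero_lt_one, le_refl 1⟩) hle
      rw [h1] at this; exact this
    · have := hmono (mem_Ici.2 (le_refl 1)) (mem_Ici.2 hle) hle
      rw [h1] at this; exact this
  have hmul : t ^ s * t ^ (2 - s) = t ^ (2:ℕ) := by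
    rw [← Real.rpow_add ht, ← Real.rpow_natCast t 2]
    norm_num
  have : h t = t ^ s + t ^ (2 - s) - t ^ (2:ℕ) - 1 - s * (s - 2) * (t - 1) ^ 2 := rfl
  nlinarith [hpos, hmul]

/-- **Algebraic inequality for negative powers** (Lemma 3.2): for `q > 0`, `q ≠ 1`,
`a,b > 0`: `(b−a)(a^{−q} − b^{−q}) ≥ (4q/(1−q)²)(b^{(1−q)/2} − a^{(1−q)/2})²`. -/
theorem alg_ineq_negative_powers (q a b : ℝ) (hq : 0 < q) (hq1 : q ≠ 1)
    (ha : 0 < a) (hb : 0 < b) :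
    4 * q / (1 - q) ^ 2 * (b ^ ((1 - q) / 2) - a ^ ((1 - q) / 2)) ^ 2 ≤
      (b - a) * (a ^ (-q) - b ^ (-q)) := by
  set r : ℝ := (1 - q) / 2 with hr
  have hr0 : r ≠ 0 := by
    simp only [hr, div_ne_zero_iff]
    constructor
    · intro h; exact hq1 (by linarith)
    · norm_num
  set s : ℝ := 1 / r with hsdef
  have hs0 : s ≠ 0 := one_div_ne_zero hr0
  have hrs : r * s = 1 := by rw [hsdef]; exact mul_one_div_cancel hr0
  have hq_eq : q = 1 - 2 * r := by rw [hr]; ring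
  have hs : s < 0 ∨ 2 < s := by
    rcases lt_or_gt_of_ne hq1 with h | h
    · right
      have hrpos : 0 < r := by rw [hr]; linarith
      rw [hsdef, lt_div_iff₀ hrpos]
      rw [hr]; linarith
    · left
      have hrneg : r < 0 := by rw [hr]; linarith
      rw [hsdef]
      exact div_neg_of_pos_of_neg zero_lt_one hrneg
  set t : ℝ := (b / a) ^ r with htdef
  have hba : 0 < b / a := div_pos hb ha
  have ht : 0 < t := Real.rpow_pos_of_pos hba r
  have hts : t ^ s = b / a := by
    rw [htdef, ← Real.rpow_mul hba.le, hrs, Real.rpow_one]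
  have ht2s : t ^ (2 - s) = (b / a) ^ (-q) := by
    rw [htdef, ← Real.rpow_mul hba.le]
    congr 1
    have : r * (2 - s) = 2 * r - r * s := by ring
    rw [this, hrs, hq_eq]; ring
  have hcoef : s * (s - 2) = 4 * q / (1 - q) ^ 2 := by
    have h1q : (1 - q) ≠ 0 := sub_ne_zero.2 (Ne.symm hq1)
    rw [hsdef, hr]
    field_simp
    ring
  have key := core_ineq s hs ht
  rw [hts, ht2s, hcoef] at key
  have htm1 : t - 1 = (b ^ r - a ^ r) / a ^ r := by
    rw [htdef, Real.div_rpow hb.le ha.le]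
    field_simp
  have har : 0 < a ^ r := Real.rpow_pos_of_pos ha r
  have haq : 0 < a ^ (-q) := Real.rpow_pos_of_pos ha (-q)
  have hbs : b / a - 1 = (b - a) / a := by field_simp
  have hdq : (b / a) ^ (-q) = b ^ (-q) / a ^ (-q) := Real.div_rpow hb.le ha.le (-q)
  rw [htm1, hbs, hdq] at key
  have h1m : (1 : ℝ) - b ^ (-q) / a ^ (-q) = (a ^ (-q) - b ^ (-q)) / a ^ (-q) := by
    field_simp
  rw [h1m] at key
  have ha2r : (a ^ r) ^ 2 = a ^ (1 - q) := by
    rw [← Real.rpow_natCast (a ^ r) 2, ← Real.rpow_mul ha.le]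
    have e : r * ((2:ℕ):ℝ) = 1 - q := by push_cast; rw [hr]; ring
    rw [e]
  have haaq : a * a ^ (-q) = a ^ (1 - q) := by
    nth_rewrite 1 [← Real.rpow_one a]
    rw [← Real.rpow_add ha]
    congr 1
  have hapos : 0 < a ^ (1 - q) := Real.rpow_pos_of_pos ha _
  have e1 : 4 * q / (1 - q) ^ 2 * ((b ^ r - a ^ r) / a ^ r) ^ 2
      = 4 * q / (1 - q) ^ 2 * (b ^ r - a ^ r) ^ 2 / a ^ (1 - q) := by
    rw [div_pow, ha2r]; ring
  have e2 : (b - a) / a * ((a ^ (-q) - b ^ (-q)) / a ^ (-q))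
      = (b - a) * (a ^ (-q) - b ^ (-q)) / a ^ (1 - q) := by
    rw [div_mul_div_comm, haaq]
  rw [e1, e2] at key
  calc 4 * q / (1 - q) ^ 2 * (b ^ r - a ^ r) ^ 2
      = (4 * q / (1 - q) ^ 2 * (b ^ r - a ^ r) ^ 2 / a ^ (1 - q)) * a ^ (1 - q) := by
        rw [div_mul_cancel₀ _ hapos.ne']
    _ ≤ ((b - a) * (a ^ (-q) - b ^ (-q)) / a ^ (1 - q)) * a ^ (1 - q) :=
        mul_le_mul_of_nonneg_right key hapos.le
    _ = (b - a) * (a ^ (-q) - b ^ (-q)) := by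
        rw [div_mul_cancel₀ _ hapos.ne']
end

section
/- Algebraic inequality with cut-off factors, case q > 1: Let q > 1, a,b > 0 and τ₁,τ₂ ≥ 0, and set ϑ(q) = max(4, (6q−5)/2). Then (b−a)( τ₁^{q+1} a^{−q} − τ₂^{q+1} b^{−q} ) ≥ (1/(q−1)) τ₁τ₂ [ (b/τ₂)^{(1−q)/2} − (a/τ₁)^{(1−q)/2} ]² − ϑ(q) (τ₂−τ₁)² [ (b/τ₂)^{1−q} + (a/τ₁)^{1−q} ], where, since 1−q < 0, any term (x/0)^{1−q} or (x/0)^{(1−q)/2} with x > 0 is interpreted as 0 (so division by τᵢ = 0 is allowed). -/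
lemma key_t (t r : ℝ) (ht : 1 ≤ t) (hr : 0 < r) :
    r * (t^2 - 1)^2 ≤
      12 * (t^2 + 1) * (t^2 * t^r + (t^r)⁻¹ - t^2 - 1 - r/2 * (t-1)^2) := by
  have ht0 : 0 < t := lt_of_lt_of_le one_pos ht
  set W := t ^ r with hW
  have hW0 : 0 < W := Real.rpow_pos_of_pos ht0 r
  have hlog : 1 - t⁻¹ ≤ Real.log t := by
    have h := Real.log_le_sub_one_of_pos (show (0:ℝ) < t⁻¹ by positivity)
    rw [Real.log_inv] at h
    linarith
  have hW2 : 1 + r * (1 - t⁻¹) ≤ W := by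
    have h1 : r * (1 - t⁻¹) ≤ r * Real.log t := mul_le_mul_of_nonneg_left hlog hr.le
    have h2 : r * Real.log t + 1 ≤ Real.exp (r * Real.log t) := Real.add_one_le_exp _
    have h3 : Real.exp (r * Real.log t) = W := by
      rw [hW, Real.rpow_def_of_pos ht0, mul_comm]
    linarith
  have hWt : r * (t - 1) ≤ t * (W - 1) := by
    have h4 := mul_le_mul_of_nonneg_right hW2 ht0.le
    have h5 : (1 + r * (1 - t⁻¹)) * t = t + r * (t - 1) := by
      field_simp
    nlinarith [h4, h5]
  have hW1 : 1 ≤ W := by nlinarith [hWt]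
  have hid : t^2 * W + W⁻¹ - t^2 - 1 = (W - 1) * (t^2 - 1) + (W - 1)^2 * W⁻¹ := by
    field_simp
    ring
  have h6 : r * (t - 1) * (t^2 - 1) ≤ t * (W - 1) * (t^2 - 1) :=
    mul_le_mul_of_nonneg_right hWt (by nlinarith)
  have h7 : 0 ≤ (W - 1)^2 * W⁻¹ := by positivity
  have h8 : 0 ≤ ((W - 1)^2 * W⁻¹) * t := mul_nonneg h7 ht0.le
  have hidt : (t^2 * W + W⁻¹ - t^2 - 1) * t
      = ((W - 1) * (t^2 - 1)) * t + ((W - 1)^2 * W⁻¹) * t := by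
    linear_combination t * hid
  have hBt : r * (t-1) * (t^2-1) - r/2 * (t-1)^2 * t
      ≤ (t^2 * W + W⁻¹ - t^2 - 1 - r/2 * (t-1)^2) * t := by
    nlinarith [h6, h8, hidt]
  have hpoly : r * (t^2-1)^2 * t
      ≤ 12 * (t^2+1) * (r * (t-1) * (t^2-1) - r/2 * (t-1)^2 * t) := by
    nlinarith [mul_nonneg (mul_nonneg hr.le (sq_nonneg (t-1)))
      (show (0:ℝ) ≤ 5*t^3 + 10*t^2 + 5*t + 12 by positivity)]
  have hmul := mul_le_mul_of_nonneg_left hBt (show (0:ℝ) ≤ 12*(t^2+1) by positivity)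
  rw [← mul_le_mul_iff_of_pos_right ht0]
  nlinarith [le_trans hpoly hmul]

lemma keyXY' (X Y r : ℝ) (hY : 0 < Y) (hXY : Y ≤ X) (hr : 0 < r) :
    r * (X^2 - Y^2)^2 ≤ 12 * (X^2 + Y^2) *
      ((X/Y)^r * X^2 + Y^2 / ((X/Y)^r) - X^2 - Y^2 - r/2 * (X-Y)^2) := by
  obtain ⟨t, ht1, rfl⟩ : ∃ t, 1 ≤ t ∧ X = t * Y :=
    ⟨X / Y, by rw [le_div_iff₀ hY]; linarith, by field_simp⟩
  rw [mul_div_assoc, div_self hY.ne', mul_one]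
  have h2 := mul_le_mul_of_nonneg_left (key_t t r ht1 hr) (pow_nonneg hY.le 4)
  have hW0 : 0 < t ^ r := Real.rpow_pos_of_pos (by linarith : (0:ℝ) < t) r
  have e1 : Y^2 / t^r = Y^2 * (t^r)⁻¹ := by ring
  nlinarith [h2]

lemma keyXY (X Y r : ℝ) (hX : 0 < X) (hY : 0 < Y) (hr : 0 < r) :
    r * (X^2 - Y^2)^2 ≤ 12 * (X^2 + Y^2) *
      ((X/Y)^r * X^2 + Y^2 / ((X/Y)^r) - X^2 - Y^2 - r/2 * (X-Y)^2) := by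
  rcases le_total Y X with h | h
  · exact keyXY' X Y r hY h hr
  · have h0 := keyXY' Y X r hX h hr
    have hinv : (Y/X)^r = ((X/Y)^r)⁻¹ := by
      rw [← Real.inv_rpow (by positivity), inv_div]
    have hW0 : 0 < (X/Y)^r := Real.rpow_pos_of_pos (by positivity) r
    rw [hinv] at h0
    have e2 : X^2 / ((X/Y)^r)⁻¹ = X^2 * (X/Y)^r := by
      field_simp
    rw [e2] at h0
    have e1 : Y^2 / ((X/Y)^r) = Y^2 * ((X/Y)^r)⁻¹ := by ring
    nlinarith [h0]

set_option maxHeartbeats 1600000 in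
/-- **Algebraic inequality with cut-off factors, case `q > 1`** (Lemma 3.3(i)):
for `q > 1`, `a,b > 0`, `τ₁,τ₂ ≥ 0`, with `ϑ(q) = max(4,(6q−5)/2)`:
`(b−a)(τ₁^{q+1}a^{−q} − τ₂^{q+1}b^{−q}) ≥ (q−1)⁻¹ τ₁τ₂ ((b/τ₂)^{(1−q)/2} − (a/τ₁)^{(1−q)/2})²
 − ϑ(q)(τ₂−τ₁)²((b/τ₂)^{1−q} + (a/τ₁)^{1−q})`,
with the convention (as in Lean) that `x/0 = 0` and `0^p = 0` for `p ≠ 0`. -/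
theorem alg_ineq_cutoff_q_gt_one (q a b τ₁ τ₂ : ℝ) (hq : 1 < q)
    (ha : 0 < a) (hb : 0 < b) (hτ₁ : 0 ≤ τ₁) (hτ₂ : 0 ≤ τ₂) :
    1 / (q - 1) * (τ₁ * τ₂) *
        ((b / τ₂) ^ ((1 - q) / 2) - (a / τ₁) ^ ((1 - q) / 2)) ^ 2 -
      max 4 ((6 * q - 5) / 2) * (τ₂ - τ₁) ^ 2 *
        ((b / τ₂) ^ (1 - q) + (a / τ₁) ^ (1 - q)) ≤
    (b - a) * (τ₁ ^ (q + 1) * a ^ (-q) - τ₂ ^ (q + 1) * b ^ (-q)) := by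
  have hq1 : (0:ℝ) < q - 1 := by linarith
  have he1 : ((1:ℝ) - q) / 2 ≠ 0 := by intro h; nlinarith [h]
  have he2 : (1:ℝ) - q ≠ 0 := by intro h; nlinarith [h]
  have he3 : q + 1 ≠ 0 := by intro h; nlinarith [h]
  set ϑ := max (4:ℝ) ((6*q-5)/2) with hϑdef
  have hϑ4 : (4:ℝ) ≤ ϑ := le_max_left _ _
  have hϑq : (6*q-5)/2 ≤ ϑ := le_max_right _ _
  clear_value ϑ
  -- helper equalities for boundary cases
  have ediv : ∀ u τ : ℝ, 0 < u → 0 < τ →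
      (u/τ) ^ (1-q) = (u * u^(-q)) * τ^(q-1) := by
    intro u τ hu hτ
    have ht : τ^(q-1) * τ^(1-q) = 1 := by
      rw [← Real.rpow_add hτ]; norm_num
    have hbb : u^(1-q) = u * u^(-q) := by
      rw [show (1:ℝ)-q = 1 + (-q) by ring, Real.rpow_add hu, Real.rpow_one]
    rw [Real.div_rpow hu.le hτ.le, div_eq_iff (Real.rpow_pos_of_pos hτ _).ne', hbb,
      mul_assoc, ht, mul_one]
  have epow : ∀ τ : ℝ, 0 < τ → τ ^ (q+1) = τ^(q-1) * τ^2 := by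
    intro τ hτ
    have h := Real.rpow_add hτ (q-1) 2
    rw [show q+(1:ℝ) = (q-1)+2 by ring, h, show ((2:ℝ):ℝ) = ((2:ℕ):ℝ) by norm_num,
      Real.rpow_natCast]
  rcases eq_or_lt_of_le hτ₁ with h1 | h1
  · -- τ₁ = 0
    rw [← h1, div_zero, Real.zero_rpow he1, Real.zero_rpow he2, Real.zero_rpow he3]
    rcases eq_or_lt_of_le hτ₂ with h2 | h2
    · rw [← h2, div_zero, Real.zero_rpow he1, Real.zero_rpow he2, Real.zero_rpow he3]
      norm_num
    · rw [ediv b τ₂ hb h2, epow τ₂ h2]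
      have hb' : 0 < b ^ (-q) := Real.rpow_pos_of_pos hb _
      have ht' : 0 < τ₂ ^ (q-1) := Real.rpow_pos_of_pos h2 _
      have hkey : 0 ≤ τ₂^(q-1) * τ₂^2 * b^(-q) * (a - b + ϑ * b) := by
        have hh : 0 < a - b + ϑ * b := by nlinarith
        positivity
      nlinarith [hkey]
  · rcases eq_or_lt_of_le hτ₂ with h2 | h2
    · -- τ₂ = 0
      rw [← h2, div_zero, Real.zero_rpow he1, Real.zero_rpow he2, Real.zero_rpow he3]
      rw [ediv a τ₁ ha h1, epow τ₁ h1]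
      have ha' : 0 < a ^ (-q) := Real.rpow_pos_of_pos ha _
      have ht' : 0 < τ₁ ^ (q-1) := Real.rpow_pos_of_pos h1 _
      have hkey : 0 ≤ τ₁^(q-1) * τ₁^2 * a^(-q) * (b - a + ϑ * a) := by
        have hh : 0 < b - a + ϑ * a := by nlinarith
        positivity
      nlinarith [hkey]
    · -- main case : τ₁, τ₂ > 0
      set r := 2 / (q-1) with hr_def
      have hr : 0 < r := by positivity
      clear_value r
      set x := a / τ₁ with hx_def
      set y := b / τ₂ with hy_def
      have hx : 0 < x := div_pos ha h1
      have hy : 0 < y := div_pos hb h2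
      clear_value x y
      set X := x ^ ((1-q)/2) with hX_def
      set Y := y ^ ((1-q)/2) with hY_def
      have hX : 0 < X := Real.rpow_pos_of_pos hx _
      have hY : 0 < Y := Real.rpow_pos_of_pos hy _
      have hX2 : x ^ (1-q) = X^2 := by
        rw [hX_def, sq, ← Real.rpow_add hx, show (1-q)/2 + (1-q)/2 = 1-q by ring]
      have hY2 : y ^ (1-q) = Y^2 := by
        rw [hY_def, sq, ← Real.rpow_add hy, show (1-q)/2 + (1-q)/2 = 1-q by ring]
      have hax : a = τ₁ * x := by rw [hx_def]; field_simp
      have hby : b = τ₂ * y := by rw [hy_def]; field_simp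
      have hxq : ∀ u : ℝ, 0 < u → u^(-q) * u = u^(1-q) := by
        intro u hu
        calc u^(-q) * u = u^(-q) * u^(1:ℝ) := by rw [Real.rpow_one]
        _ = u^(-q+1) := (Real.rpow_add hu _ _).symm
        _ = u^(1-q) := by ring_nf
      have hA : τ₁ ^ (q+1) * a ^ (-q) = τ₁ * (X^2 / x) := by
        have ha1 : a ^ (-q) = x ^ (-q) * τ₁ ^ (-q) := by
          rw [hax, Real.mul_rpow h1.le hx.le]; ring
        have ha2 : x ^ (-q) = X^2 / x := by
          rw [eq_div_iff hx.ne', ← hX2, hxq x hx]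
        have ha3 : τ₁ ^ (q+1) * τ₁ ^ (-q) = τ₁ := by
          rw [← Real.rpow_add h1]; norm_num
        rw [ha1, ha2]
        calc τ₁ ^ (q+1) * (X^2/x * τ₁^(-q)) = (τ₁^(q+1) * τ₁^(-q)) * (X^2/x) := by ring
        _ = τ₁ * (X^2/x) := by rw [ha3]
      have hB : τ₂ ^ (q+1) * b ^ (-q) = τ₂ * (Y^2 / y) := by
        have ha1 : b ^ (-q) = y ^ (-q) * τ₂ ^ (-q) := by
          rw [hby, Real.mul_rpow h2.le hy.le]; ring
        have ha2 : y ^ (-q) = Y^2 / y := by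
          rw [eq_div_iff hy.ne', ← hY2, hxq y hy]
        have ha3 : τ₂ ^ (q+1) * τ₂ ^ (-q) = τ₂ := by
          rw [← Real.rpow_add h2]; norm_num
        rw [ha1, ha2]
        calc τ₂ ^ (q+1) * (Y^2/y * τ₂^(-q)) = (τ₂^(q+1) * τ₂^(-q)) * (Y^2/y) := by ring
        _ = τ₂ * (Y^2/y) := by rw [ha3]
      obtain ⟨W, hW_def⟩ : ∃ W, W = (X/Y)^r := ⟨_, rfl⟩
      have hWyx : W = y / x := by
        rw [hW_def, hX_def, hY_def, ← Real.div_rpow hx.le hy.le,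
          ← Real.rpow_mul (div_nonneg hx.le hy.le),
          show (1-q)/2 * r = -1 by rw [hr_def]; field_simp; ring,
          Real.rpow_neg_one, inv_div]
      have hW0 : 0 < W := by rw [hWyx]; positivity
      have hyW : y = W * x := by rw [hWyx]; field_simp
      clear_value X Y
      -- rewrite the goal
      rw [hX2, hY2, hA, hB]
      have hba : b - a = τ₂*W*x - τ₁*x := by rw [hax, hby, hyW]; ring
      rw [hba, hyW]
      -- quadratic-form machinery
      have hkey := keyXY X Y r hX hY hr
      rw [← hW_def] at hkey
      clear hA hB hX2 hY2 hax hby hba hWyx hyW hW_def hx_def hy_def hX_def hY_def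
      clear ediv epow he1 he2 he3 ha hb hq hϑdef
      obtain ⟨S, hS_def⟩ : ∃ S, S = X^2 + Y^2 := ⟨_, rfl⟩
      obtain ⟨D, hD_def⟩ : ∃ D,
          D = W * X^2 + Y^2 / W - X^2 - Y^2 - r/2 * (X-Y)^2 := ⟨_, rfl⟩
      have hS : 0 < S := by rw [hS_def]; positivity
      have hkey' : r * (X^2 - Y^2)^2 ≤ 12 * S * D := by
        rw [hS_def, hD_def]; exact hkey
      have hD : 0 ≤ D := by
        have h0 : 0 ≤ 12 * S * D :=
          le_trans (mul_nonneg hr.le (sq_nonneg (X^2 - Y^2))) hkey'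
        nlinarith [h0, hS]
      have h12 : 12 ≤ r * (2*ϑ - 1) := by
        rw [hr_def, div_mul_eq_mul_div, le_div_iff₀ hq1]
        nlinarith [hϑq]
      have hXY2 : (X^2 - Y^2)^2 ≤ (2*ϑ-1) * (S * D) := by
        have h := mul_le_mul_of_nonneg_right h12 (mul_nonneg hS.le hD)
        have h' : r * (X^2-Y^2)^2 ≤ r * ((2*ϑ-1) * (S*D)) := by nlinarith [hkey', h]
        exact le_of_mul_le_mul_left h' hr
      obtain ⟨P, hP_def⟩ : ∃ P, P = ϑ * S - X^2 := ⟨_, rfl⟩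
      obtain ⟨Q, hQ_def⟩ : ∃ Q, Q = ϑ * S - Y^2 := ⟨_, rfl⟩
      obtain ⟨R, hR_def⟩ : ∃ R, R = 2 * ϑ * S - (D + S) := ⟨_, rfl⟩
      have hP : 0 < P := by
        rw [hP_def, hS_def]; nlinarith [hϑ4, sq_nonneg X, pow_pos hY 2]
      have hQ : 0 < Q := by
        rw [hQ_def, hS_def]; nlinarith [hϑ4, sq_nonneg Y, pow_pos hX 2]
      have hEE : 0 ≤ P * τ₁^2 + Q * τ₂^2 - R * (τ₁ * τ₂) := by
        rcases le_or_gt D ((2*ϑ-1) * S) with hc | hc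
        · have hDD : D * D ≤ (2*ϑ-1) * S * D := mul_le_mul_of_nonneg_right hc hD
          have hRPQ : R^2 ≤ 4 * (P * Q) := by
            rw [hR_def, hP_def, hQ_def]
            rw [hS_def] at hDD hXY2 ⊢
            nlinarith [hXY2, hDD]
          have hident : 4 * P * (P * τ₁^2 + Q * τ₂^2 - R * (τ₁*τ₂))
              = (2*P*τ₁ - R*τ₂)^2 + (4*(P*Q) - R^2) * τ₂^2 := by ring
          nlinarith [sq_nonneg (2*P*τ₁ - R*τ₂),
            mul_nonneg (sub_nonneg.mpr hRPQ) (sq_nonneg τ₂), hP, hident]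
        · have hR0 : R ≤ 0 := by rw [hR_def]; linarith
          have h3 := mul_nonneg (neg_nonneg.mpr hR0) (mul_nonneg hτ₁ hτ₂)
          nlinarith [mul_nonneg hP.le (sq_nonneg τ₁), mul_nonneg hQ.le (sq_nonneg τ₂), h3]
      have hq2 : 1/(q-1) = r/2 := by rw [hr_def]; ring
      have hgoal_eq : (τ₂*W*x - τ₁*x) * (τ₁ * (X^2/x) - τ₂ * (Y^2/(W*x)))
          - (1/(q-1) * (τ₁*τ₂) * (Y - X)^2 - ϑ * (τ₂-τ₁)^2 * (Y^2 + X^2))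
          = P * τ₁^2 + Q * τ₂^2 - R * (τ₁*τ₂) := by
        rw [hq2, hP_def, hQ_def, hR_def, hD_def, hS_def]
        field_simp [hx.ne', hW0.ne']
        ring
      linarith [hEE, hgoal_eq]
end

section
/- Algebraic inequality with cut-off factors, case 0 < q < 1: Let q ∈ (0,1), a,b > 0 and τ₁,τ₂ ≥ 0. Set ζ(q) = 4q/(1−q), ζ₁(q) = ζ(q)/6 and ζ₂(q) = ζ(q) + 9/q. Then (b−a)( τ₁² a^{−q} − τ₂² b^{−q} ) ≥ ζ₁(q) ( τ₂ b^{(1−q)/2} − τ₁ a^{(1−q)/2} )² − ζ₂(q) (τ₂−τ₁)² ( b^{1−q} + a^{1−q} ). -/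
open Set Real

lemma nonneg_on_Ici {f f' : ℝ → ℝ}
    (hd : ∀ u : ℝ, 1 ≤ u → HasDerivAt f (f' u) u)
    (h' : ∀ u : ℝ, 1 ≤ u → 0 ≤ f' u)
    (h1 : f 1 = 0) {u : ℝ} (hu : 1 ≤ u) : 0 ≤ f u := by
  have hm : MonotoneOn f (Set.Ici 1) := by
    apply monotoneOn_of_deriv_nonneg (convex_Ici 1)
    · exact fun x hx => (hd x hx).continuousAt.continuousWithinAt
    · intro x hx
      rw [interior_Ici] at hx
      exact (hd x hx.le).differentiableAt.differentiableWithinAt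
    · intro x hx
      rw [interior_Ici] at hx
      rw [(hd x hx.le).deriv]
      exact h' x hx.le
  calc (0:ℝ) = f 1 := h1.symm
  _ ≤ f u := hm (mem_Ici.2 le_rfl) (mem_Ici.2 hu) hu

lemma keyH (r : ℝ) (hr : 2 < r) {u : ℝ} (hu : 1 ≤ u) :
    r*(r-2)*(u-1)^2 ≤ u ^ r + u ^ (2-r) - u^2 - 1 := by
  have h3 : ∀ u : ℝ, 1 ≤ u → 0 ≤ r*(r-1)*(r-2)*(u^(r-3) - u^(-r-1)) := by
    intro u hu
    have h := Real.rpow_le_rpow_of_exponent_le hu (by linarith : -r-1 ≤ r-3)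
    have hpos : 0 ≤ r*(r-1)*(r-2) := le_of_lt (mul_pos (mul_pos (by linarith) (by linarith)) (by linarith))
    exact mul_nonneg hpos (by linarith)
  have hd2 : ∀ u : ℝ, 1 ≤ u → HasDerivAt
      (fun u : ℝ => r*(r-1)*u^(r-2) + (r-2)*(r-1)*u^(-r) - (2 + 2*r*(r-2)))
      (r*(r-1)*(r-2)*(u^(r-3) - u^(-r-1))) u := by
    intro u hu
    have hu0 : u ≠ 0 := by intro h; rw [h] at hu; linarith
    have h1 := (Real.hasDerivAt_rpow_const (x := u) (p := r-2) (Or.inl hu0)).const_mul (r*(r-1))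
    have h2 := (Real.hasDerivAt_rpow_const (x := u) (p := -r) (Or.inl hu0)).const_mul ((r-2)*(r-1))
    have := (h1.add h2).sub_const (2 + 2*r*(r-2))
    convert this using 1
    · rfl
    · rfl
    · rfl
    rw [show r-2-1 = r-3 by ring, show -r-1 = -r-1 by ring]
    ring
  have h2 : ∀ u : ℝ, 1 ≤ u →
      0 ≤ r*(r-1)*u^(r-2) + (r-2)*(r-1)*u^(-r) - (2 + 2*r*(r-2)) := by
    intro u hu
    exact nonneg_on_Ici hd2 h3 (by norm_num [Real.one_rpow]; ring) hu
  have hd1 : ∀ u : ℝ, 1 ≤ u → HasDerivAt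
      (fun u : ℝ => r*u^(r-1) + (2-r)*u^(1-r) - 2*u - 2*r*(r-2)*(u-1))
      (r*(r-1)*u^(r-2) + (r-2)*(r-1)*u^(-r) - (2 + 2*r*(r-2))) u := by
    intro u hu
    have hu0 : u ≠ 0 := by intro h; rw [h] at hu; linarith
    have k1 := (Real.hasDerivAt_rpow_const (x := u) (p := r-1) (Or.inl hu0)).const_mul r
    have k2 := (Real.hasDerivAt_rpow_const (x := u) (p := 1-r) (Or.inl hu0)).const_mul (2-r)
    have k3 := (hasDerivAt_id u).const_mul (2:ℝ)
    have k4 := ((hasDerivAt_id u).sub_const 1).const_mul (2*r*(r-2))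
    have := ((k1.add k2).sub k3).sub k4
    convert this using 1
    · rfl
    · rfl
    · rfl
    rw [show r-1-1 = r-2 by ring, show 1-r-1 = -r by ring]
    ring
  have h1 : ∀ u : ℝ, 1 ≤ u →
      0 ≤ r*u^(r-1) + (2-r)*u^(1-r) - 2*u - 2*r*(r-2)*(u-1) := by
    intro u hu
    exact nonneg_on_Ici hd1 h2 (by norm_num [Real.one_rpow]) hu
  have hd0 : ∀ u : ℝ, 1 ≤ u → HasDerivAt
      (fun u : ℝ => u^r + u^(2-r) - u^2 - 1 - r*(r-2)*(u-1)^2)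
      (r*u^(r-1) + (2-r)*u^(1-r) - 2*u - 2*r*(r-2)*(u-1)) u := by
    intro u hu
    have hu0 : u ≠ 0 := by intro h; rw [h] at hu; linarith
    have k1 := Real.hasDerivAt_rpow_const (x := u) (p := r) (Or.inl hu0)
    have k2 := Real.hasDerivAt_rpow_const (x := u) (p := 2-r) (Or.inl hu0)
    have k3 := hasDerivAt_pow 2 u
    have k4 := (((hasDerivAt_id u).sub_const 1).pow 2).const_mul (r*(r-2))
    have := (((k1.add k2).sub k3).sub_const 1).sub k4
    convert this using 1
    · rfl
    · rfl
    · rfl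
    rw [show 2-r-1 = 1-r by ring]
    simp only [id_eq]
    push_cast
    ring
  have h0 := nonneg_on_Ici hd0 h1 (by norm_num [Real.one_rpow]) hu
  linarith

lemma key1 {q a b : ℝ} (hq : 0 < q) (hq1 : q < 1) (ha : 0 < a) (hab : a ≤ b) :
    4*q*(b^((1-q)/2) - a^((1-q)/2))^2 ≤ (1-q)^2 * ((b-a)*(a^(-q) - b^(-q))) := by
  obtain ⟨t, htdef⟩ : ∃ t:ℝ, t = 1 - q := ⟨_, rfl⟩
  have ht : 0 < t := by rw [htdef]; linarith
  have ht1 : t < 1 := by rw [htdef]; linarith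
  have htne : t ≠ 0 := ne_of_gt ht
  have hb : 0 < b := lt_of_lt_of_le ha hab
  obtain ⟨r, hrdef⟩ : ∃ r:ℝ, r = 2/t := ⟨_, rfl⟩
  have hr : 2 < r := by rw [hrdef, lt_div_iff₀ ht]; linarith
  obtain ⟨A, hAdef⟩ : ∃ A:ℝ, A = b/a := ⟨_, rfl⟩
  have hA0 : 0 < A := by rw [hAdef]; exact div_pos hb ha
  have hA1 : 1 ≤ A := by rw [hAdef]; exact (one_le_div ha).2 hab
  obtain ⟨u, hudef⟩ : ∃ u:ℝ, u = A ^ (t/2) := ⟨_, rfl⟩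
  have hu : 1 ≤ u := by
    rw [hudef]; exact Real.one_le_rpow hA1 (by linarith)
  have hrt : r * t = 2 := by rw [hrdef]; field_simp
  have hH := keyH r hr hu
  have c1 : u ^ r = A := by
    rw [hudef, ← Real.rpow_mul hA0.le, show t/2*r = 1 by rw [hrdef]; field_simp,
      Real.rpow_one]
  have c2 : u ^ (2 - r) = A ^ (-q) := by
    rw [hudef, ← Real.rpow_mul hA0.le,
      show t/2*(2-r) = -q by linear_combination (-(1:ℝ)/2)*hrt + htdef]
  have c3 : (u:ℝ) ^ (2:ℕ) = A ^ t := by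
    rw [hudef, sq, ← Real.rpow_add hA0, show t/2+t/2 = t by ring]
  rw [c1, c2, c3] at hH
  have hat : a ^ t = a * a ^ (-q) := by
    rw [show t = 1 + -q by rw [htdef]; ring, Real.rpow_add ha, Real.rpow_one]
  have hbt : b ^ t = b * b ^ (-q) := by
    rw [show t = 1 + -q by rw [htdef]; ring, Real.rpow_add hb, Real.rpow_one]
  have E2 : a ^ t * A ^ (-q) = a * b ^ (-q) := by
    rw [hAdef, Real.div_rpow hb.le ha.le, hat]
    field_simp [ne_of_gt (Real.rpow_pos_of_pos ha (-q))]
  have E3 : a ^ t * A ^ t = b ^ t := by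
    rw [hAdef, Real.div_rpow hb.le ha.le]
    field_simp [ne_of_gt (Real.rpow_pos_of_pos ha t)]
  have E4 : a ^ (t/2) * u = b ^ (t/2) := by
    rw [hudef, hAdef, Real.div_rpow hb.le ha.le]
    field_simp [ne_of_gt (Real.rpow_pos_of_pos ha (t/2))]
  have E1 : a ^ t * A = b * a ^ (-q) := by
    rw [hAdef, hat]; field_simp
  have hmul := mul_le_mul_of_nonneg_left hH
    (by positivity : (0:ℝ) ≤ t^2 * a ^ t)
  calc 4*q*(b^((1-q)/2) - a^((1-q)/2))^2
      = t^2 * a^t * (r*(r-2)*(u-1)^2) := by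
        have e : b^((1-q)/2) - a^((1-q)/2) = a^(t/2) * (u - 1) := by
          rw [mul_sub, E4, mul_one, htdef]
        have e2 : (a^(t/2))^2 = a^t := by
          rw [sq, ← Real.rpow_add ha, show t/2+t/2 = t by ring]
        have h4q : t^2*(r*(r-2)) = 4*q := by
          linear_combination (r*t + 2 - 2*t) * hrt + (-4) * htdef
        rw [e, mul_pow, e2]
        linear_combination (-(a^t*(u-1)^2)) * h4q
    _ ≤ t^2 * a^t * (A + A ^ (-q) - A ^ t - 1) := hmul
    _ = (1-q)^2 * ((b-a)*(a^(-q) - b^(-q))) := by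
        rw [show t^2*a^t*(A + A^(-q) - A^t - 1)
            = t^2 * (a^t*A + a^t*A^(-q) - a^t*A^t - a^t) by ring,
          E1, E2, E3, hat, hbt, htdef]
        ring

lemma key2 {q a b : ℝ} (hq : 0 < q) (hq1 : q < 1) (ha : 0 < a) (hab : a ≤ b) :
    (1-q)*((b-a)*b^(-q)) ≤ 2*(b^((1-q)/2) - a^((1-q)/2))*b^((1-q)/2) := by
  have hb : 0 < b := lt_of_lt_of_le ha hab
  obtain ⟨t, htdef⟩ : ∃ t:ℝ, t = 1 - q := ⟨_, rfl⟩
  have ht : 0 < t := by rw [htdef]; linarith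
  rw [← htdef]
  obtain ⟨v, hvdef⟩ : ∃ v:ℝ, v = a/b := ⟨_, rfl⟩
  have hv0 : 0 ≤ v := by rw [hvdef]; positivity
  have hAM : v^(t/2) ≤ (t/2)*v + (1-t/2) := by
    have h := Real.geom_mean_le_arith_mean2_weighted (by linarith : (0:ℝ) ≤ t/2)
      (by rw [htdef]; linarith : (0:ℝ) ≤ 1-t/2) hv0 zero_le_one (by ring)
    simpa [Real.one_rpow] using h
  have hbt : b ^ t = b * b ^ (-q) := by
    rw [show t = 1 + -q by rw [htdef]; ring, Real.rpow_add hb, Real.rpow_one]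
  have e2b : b^(t/2) * b^(t/2) = b^t := by
    rw [← Real.rpow_add hb, show t/2+t/2 = t by ring]
  have G1 : b^t * v^(t/2) = a^(t/2) * b^(t/2) := by
    rw [hvdef, Real.div_rpow ha.le hb.le, ← e2b]
    field_simp [ne_of_gt (Real.rpow_pos_of_pos hb (t/2))]
  have G2 : b^t * v = a * b^(-q) := by
    rw [hvdef, hbt]; field_simp
  have hmul := mul_le_mul_of_nonneg_left hAM (by positivity : (0:ℝ) ≤ 2*b^t)
  have key : 2*b^t*(v^(t/2)) = 2*(a^(t/2)*b^(t/2)) := by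
    rw [show 2*b^t*(v^(t/2)) = 2*(b^t*v^(t/2)) by ring, G1]
  have key2' : 2*b^t*((t/2)*v + (1-t/2)) = t*(a*b^(-q)) + (2-t)*(b*b^(-q)) := by
    linear_combination t*G2 + (2-t)*hbt
  rw [key, key2'] at hmul
  linarith [hmul, e2b, hbt]

lemma poly_main {q t τ₁ τ₂ X Y D E : ℝ} (hq : 0 < q) (ht : 0 < t) (hqt : q + t = 1)
    (hτ₁ : 0 ≤ τ₁) (hτ₂ : 0 ≤ τ₂) (hX : 0 < X) (hXY : X ≤ Y)
    (hD : 4*q*(Y-X)^2 ≤ t^2*D) (hE0 : 0 ≤ E) (hE1 : t*E ≤ 2*(Y-X)*Y) (hE2 : E ≤ Y^2) :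
    10*q^2*t*(τ₂*Y-τ₁*X)^2 - (60*q^2*t + 135*t^2)*(τ₂-τ₁)^2*(X^2+Y^2)
      ≤ 15*q*t^2*(τ₁^2*D) - 15*q*t^2*((τ₂+τ₁)*(τ₂-τ₁)*E) := by
  have hq1 : q < 1 := by linarith
  have ht1 : t < 1 := by linarith
  have F1 : 15*q*τ₁^2*(4*q*(Y-X)^2) ≤ 15*q*τ₁^2*(t^2*D) :=
    mul_le_mul_of_nonneg_left hD (by positivity)
  have G5 : 0 ≤ 2*q^2*t*(τ₁*(Y-X) - 5*(τ₂-τ₁)*Y)^2 := by positivity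
  rcases le_or_gt τ₂ τ₁ with hc | hc
  · have F2 : 0 ≤ 15*q*t^2*((τ₁+τ₂)*((τ₁-τ₂)*E)) :=
      mul_nonneg (by positivity) (mul_nonneg (by linarith)
        (mul_nonneg (by linarith) hE0))
    have F4 : 0 ≤ 12*q^2*(5-t)*(τ₁*(Y-X))^2 :=
      mul_nonneg (mul_nonneg (by positivity) (by linarith)) (sq_nonneg _)
    have F5 : 0 ≤ 60*q^2*t*((τ₂-τ₁)*X)^2 := by positivity
    have F6 : 0 ≤ 135*t^2*((τ₂-τ₁)^2*(X^2+Y^2)) := by positivity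
    linarith [F1, F2, F4, F5, F6, G5]
  · have hδ : 0 ≤ τ₂ - τ₁ := by linarith
    have G2 : 30*q*t*τ₁*(τ₂-τ₁)*(t*E) ≤ 30*q*t*τ₁*(τ₂-τ₁)*(2*(Y-X)*Y) :=
      mul_le_mul_of_nonneg_left hE1 (by positivity)
    have G3 : 15*q*t^2*(τ₂-τ₁)^2*E ≤ 15*q*t^2*(τ₂-τ₁)^2*Y^2 :=
      mul_le_mul_of_nonneg_left hE2 (by positivity)
    have G4 : 0 ≤ 30*(q*τ₁*(Y-X) - t*(τ₂-τ₁)*Y)^2 := by positivity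
    have G6 : 0 ≤ 6*q^2*(5-2*t)*(τ₁*(Y-X))^2 :=
      mul_nonneg (mul_nonneg (by positivity) (by linarith)) (sq_nonneg _)
    have G7 : 0 ≤ 15*t^2*(7-q)*((τ₂-τ₁)*Y)^2 :=
      mul_nonneg (mul_nonneg (by positivity) (by linarith)) (sq_nonneg _)
    have G8 : 0 ≤ (60*q^2*t+135*t^2)*((τ₂-τ₁)*X)^2 := by positivity
    linarith [F1, G2, G3, G4, G5, G6, G7, G8]

lemma aux_main (q a b τ₁ τ₂ : ℝ) (hq0 : 0 < q) (hq1 : q < 1)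
    (ha : 0 < a) (hb : 0 < b) (hτ₁ : 0 ≤ τ₁) (hτ₂ : 0 ≤ τ₂) (hab : a ≤ b) :
    4 * q / (1 - q) / 6 * (τ₂ * b ^ ((1 - q) / 2) - τ₁ * a ^ ((1 - q) / 2)) ^ 2 -
      (4 * q / (1 - q) + 9 / q) * (τ₂ - τ₁) ^ 2 * (b ^ (1 - q) + a ^ (1 - q)) ≤
    (b - a) * (τ₁ ^ 2 * a ^ (-q) - τ₂ ^ 2 * b ^ (-q)) := by
  have hbq : 0 < b ^ (-q) := Real.rpow_pos_of_pos hb _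
  have hX : 0 < a ^ ((1-q)/2) := Real.rpow_pos_of_pos ha _
  have hXY : a ^ ((1-q)/2) ≤ b ^ ((1-q)/2) :=
    Real.rpow_le_rpow ha.le hab (by linarith)
  have hYY : (b ^ ((1-q)/2))^2 = b ^ (1-q) := by
    rw [sq, ← Real.rpow_add hb, show (1-q)/2+(1-q)/2 = 1-q by ring]
  have hXX : (a ^ ((1-q)/2))^2 = a ^ (1-q) := by
    rw [sq, ← Real.rpow_add ha, show (1-q)/2+(1-q)/2 = 1-q by ring]
  have hb1q : b ^ (1-q) = b * b ^ (-q) := by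
    rw [show (1:ℝ)-q = 1 + -q by ring, Real.rpow_add hb, Real.rpow_one]
  have hE2 : (b-a)*b^(-q) ≤ (b ^ ((1-q)/2))^2 := by
    rw [hYY, hb1q]
    exact mul_le_mul_of_nonneg_right (by linarith) hbq.le
  have hE0 : 0 ≤ (b-a)*b^(-q) := mul_nonneg (by linarith) hbq.le
  have P := poly_main (t := 1-q) (X := a ^ ((1-q)/2)) (Y := b ^ ((1-q)/2))
    (D := (b-a)*(a^(-q) - b^(-q))) (E := (b-a)*b^(-q))
    hq0 (by linarith) (by ring) hτ₁ hτ₂ hX hXY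
    (by have := key1 hq0 hq1 ha hab; linarith)
    hE0 (key2 hq0 hq1 ha hab) hE2
  have hRHS : (b - a) * (τ₁ ^ 2 * a ^ (-q) - τ₂ ^ 2 * b ^ (-q))
      = τ₁^2*((b-a)*(a^(-q) - b^(-q))) - (τ₂+τ₁)*(τ₂-τ₁)*((b-a)*b^(-q)) := by
    ring
  rw [← hYY, ← hXX, hRHS, ← sub_nonneg]
  have h15 : (0:ℝ) < 15*q*(1-q)^2 :=
    mul_pos (by linarith) (pow_pos (by linarith) 2)
  have hident : τ₁^2*((b-a)*(a^(-q) - b^(-q))) - (τ₂+τ₁)*(τ₂-τ₁)*((b-a)*b^(-q))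
      - (4 * q / (1 - q) / 6 * (τ₂ * b ^ ((1 - q) / 2) - τ₁ * a ^ ((1 - q) / 2)) ^ 2 -
      (4 * q / (1 - q) + 9 / q) * (τ₂ - τ₁) ^ 2 * ((b ^ ((1-q)/2))^2 + (a ^ ((1-q)/2))^2))
      = ((15*q*(1-q)^2*(τ₁^2*((b-a)*(a^(-q) - b^(-q))))
          - 15*q*(1-q)^2*((τ₂+τ₁)*(τ₂-τ₁)*((b-a)*b^(-q))))
        - (10*q^2*(1-q)*(τ₂*(b ^ ((1-q)/2))-τ₁*(a ^ ((1-q)/2)))^2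
          - (60*q^2*(1-q) + 135*(1-q)^2)*(τ₂-τ₁)^2*((a ^ ((1-q)/2))^2+(b ^ ((1-q)/2))^2)))
        / (15*q*(1-q)^2) := by
    have hqne : q ≠ 0 := ne_of_gt hq0
    have hq1' : (1:ℝ)-q ≠ 0 := by linarith
    field_simp
    ring
  rw [hident]
  exact div_nonneg (by linarith) h15.le

/-- **Algebraic inequality with cut-off factors, case `0 < q < 1`** (Lemma 3.3(ii)):
for `q ∈ (0,1)`, `a,b > 0`, `τ₁,τ₂ ≥ 0`, with `ζ(q) = 4q/(1−q)`, `ζ₁(q) = ζ(q)/6`,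
`ζ₂(q) = ζ(q) + 9/q`:
`(b−a)(τ₁²a^{−q} − τ₂²b^{−q}) ≥ ζ₁(q)(τ₂b^{(1−q)/2} − τ₁a^{(1−q)/2})²
 − ζ₂(q)(τ₂−τ₁)²(b^{1−q} + a^{1−q})`. -/
theorem alg_ineq_cutoff_q_lt_one (q a b τ₁ τ₂ : ℝ) (hq : q ∈ Ioo (0:ℝ) 1)
    (ha : 0 < a) (hb : 0 < b) (hτ₁ : 0 ≤ τ₁) (hτ₂ : 0 ≤ τ₂) :
    4 * q / (1 - q) / 6 * (τ₂ * b ^ ((1 - q) / 2) - τ₁ * a ^ ((1 - q) / 2)) ^ 2 -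
      (4 * q / (1 - q) + 9 / q) * (τ₂ - τ₁) ^ 2 * (b ^ (1 - q) + a ^ (1 - q)) ≤
    (b - a) * (τ₁ ^ 2 * a ^ (-q) - τ₂ ^ 2 * b ^ (-q)) := by
  rcases le_total a b with h | h
  · exact aux_main q a b τ₁ τ₂ hq.1 hq.2 ha hb hτ₁ hτ₂ h
  · have := aux_main q b a τ₂ τ₁ hq.1 hq.2 hb ha hτ₂ hτ₁ h
    linarith [this]
end

section
/- Reformulated algebraic inequality: Let q ∈ (0,1), set ζ(q) = 4q/(1−q), ζ₁(q) = ζ(q)/6, ζ₂(q) = ζ(q) + 9/q. Then for all t ≥ 1 and s > 0, with λ = s² t^{−q}: ζ₁(q) ( √(λt) − 1 )² ≤ (t−1)(1−λ) + ζ₂(q)(s−1)²( t^{1−q} + 1 ). -/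
open Set

private lemma sinh_le_mul_cosh' {y : ℝ} (hy : 0 ≤ y) : Real.sinh y ≤ y * Real.cosh y := by
  have hd : ∀ z : ℝ, HasDerivAt (fun z : ℝ => z * Real.cosh z - Real.sinh z)
      (1 * Real.cosh z + z * Real.sinh z - Real.cosh z) z := fun z =>
    ((hasDerivAt_id z).mul (Real.hasDerivAt_cosh z)).sub (Real.hasDerivAt_sinh z)
  have hmono : MonotoneOn (fun z : ℝ => z * Real.cosh z - Real.sinh z) (Set.Ici 0) := by
    apply monotoneOn_of_deriv_nonneg (convex_Ici 0)
    · exact (Continuous.mul continuous_id Real.continuous_cosh).sub Real.continuous_sinh |>.continuousOn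
    · intro z _
      exact (hd z).differentiableAt.differentiableWithinAt
    · intro z hz
      rw [(hd z).deriv]
      have hz0 : 0 ≤ z := le_of_lt (by simpa using hz)
      have : 0 ≤ z * Real.sinh z := mul_nonneg hz0 (Real.sinh_nonneg_iff.2 hz0)
      linarith
  have h := hmono (Set.self_mem_Ici) (Set.mem_Ici.2 hy) hy
  simp at h
  linarith

private lemma self_le_sinh' {y : ℝ} (hy : 0 ≤ y) : y ≤ Real.sinh y := by
  rcases eq_or_lt_of_le hy with h | h
  · simp [← h]
  · exact (Real.self_lt_sinh_iff.2 h).le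

private lemma claim1_cosh (q x : ℝ) (hq0 : 0 < q) (hq1 : q < 1) (hx : 0 ≤ x) :
    4*q*(Real.cosh ((1-q)*x/2) - 1) ≤
      (1-q)*(Real.cosh ((1+q)*x/2) - Real.cosh ((1-q)*x/2)) := by
  set a := (1-q)*x/2 with ha_def
  set b := (1+q)*x/2 with hb_def
  have ha : 0 ≤ a := div_nonneg (mul_nonneg (by linarith) hx) (by norm_num)
  have hab : a ≤ b := by rw [ha_def, hb_def]; nlinarith
  have hc2m := Real.cosh_two_mul (a/2)
  rw [show 2*(a/2) = a by ring] at hc2m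
  have hsq := Real.cosh_sq (a/2)
  have hc1 : Real.cosh a - 1 = 2 * Real.sinh (a/2)^2 := by rw [hc2m]; linarith
  have hs2m := Real.sinh_two_mul (a/2)
  rw [show 2*(a/2) = a by ring] at hs2m
  have hs1 : Real.sinh (a/2) ≤ (a/2) * Real.cosh (a/2) := sinh_le_mul_cosh' (by linarith)
  have hsa2 : 0 ≤ Real.sinh (a/2) := Real.sinh_nonneg_iff.2 (by linarith)
  have hsa : 0 ≤ Real.sinh a := Real.sinh_nonneg_iff.2 ha
  have hcbca : Real.cosh b - Real.cosh a =
      2 * Real.sinh ((b+a)/2) * Real.sinh ((b-a)/2) := by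
    rw [Real.cosh_eq, Real.cosh_eq, Real.sinh_eq, Real.sinh_eq]
    have e1 : Real.exp ((b+a)/2) * Real.exp ((b-a)/2) = Real.exp b := by
      rw [← Real.exp_add]; ring_nf
    have e2 : Real.exp ((b+a)/2) * Real.exp (-((b-a)/2)) = Real.exp a := by
      rw [← Real.exp_add]; ring_nf
    have e3 : Real.exp (-((b+a)/2)) * Real.exp ((b-a)/2) = Real.exp (-a) := by
      rw [← Real.exp_add]; ring_nf
    have e4 : Real.exp (-((b+a)/2)) * Real.exp (-((b-a)/2)) = Real.exp (-b) := by
      rw [← Real.exp_add]; ring_nf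
    linear_combination (-1/2)*e1 + (1/2)*e2 + (1/2)*e3 - (1/2)*e4
  have hm1 : Real.sinh a ≤ Real.sinh ((b+a)/2) := Real.sinh_le_sinh.2 (by linarith)
  have hm2 : (b-a)/2 ≤ Real.sinh ((b-a)/2) := self_le_sinh' (by linarith)
  have hprod := mul_le_mul_of_nonneg_left hs1 (mul_nonneg (by positivity : (0:ℝ) ≤ 8*q) hsa2)
  have hba2 : (1-q)*((b-a)*Real.sinh a) = 2*q*a*Real.sinh a := by
    rw [ha_def, hb_def]; ring
  have h3 : 2*q*a*Real.sinh a = 8*q*Real.sinh (a/2)*(a/2*Real.cosh (a/2)) := by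
    rw [hs2m]; ring
  have k1 : 4*q*(Real.cosh a - 1) ≤ (1-q)*((b-a) * Real.sinh a) := by
    rw [hc1, hba2, h3]; nlinarith [hprod]
  have p1 : 0 ≤ (Real.sinh ((b+a)/2) - Real.sinh a) * Real.sinh ((b-a)/2) :=
    mul_nonneg (by linarith) (Real.sinh_nonneg_iff.2 (by linarith))
  have p2 : 0 ≤ Real.sinh a * (Real.sinh ((b-a)/2) - (b-a)/2) :=
    mul_nonneg hsa (by linarith)
  have p3 : 0 ≤ (1-q) * (2*Real.sinh ((b+a)/2)*Real.sinh ((b-a)/2) - (b-a)*Real.sinh a) :=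
    mul_nonneg (by linarith) (by nlinarith [p1, p2])
  have k2 : (1-q)*((b-a) * Real.sinh a) ≤ (1-q)*(Real.cosh b - Real.cosh a) := by
    rw [hcbca]; nlinarith [p3]
  linarith

private lemma claim1_exp (q x : ℝ) (hq0 : 0 < q) (hq1 : q < 1) (hx : 0 ≤ x) :
    4*q*(Real.exp ((1-q)*x/2) - 1)^2 ≤
      (1-q)*((Real.exp x - 1) * (1 - Real.exp (-(q*x)))) := by
  have key := claim1_cosh q x hq0 hq1 hx
  set a := (1-q)*x/2 with ha_def
  set b := (1+q)*x/2 with hb_def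
  have hEa : (0:ℝ) < Real.exp a := Real.exp_pos _
  have hEb : (0:ℝ) < Real.exp b := Real.exp_pos _
  have key2 := mul_le_mul_of_nonneg_left key (by positivity : (0:ℝ) ≤ 2*Real.exp a)
  have hL : 2*Real.exp a*(4*q*(Real.cosh a - 1)) = 4*q*(Real.exp a - 1)^2 := by
    rw [Real.cosh_eq, Real.exp_neg]
    field_simp
    ring
  have hxab : Real.exp x = Real.exp a * Real.exp b := by
    rw [← Real.exp_add]; congr 1; rw [ha_def, hb_def]; ring
  have hqx : Real.exp (-(q*x)) = Real.exp a / Real.exp b := by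
    rw [← Real.exp_sub]; congr 1; rw [ha_def, hb_def]; ring
  have hR : 2*Real.exp a*((1-q)*(Real.cosh b - Real.cosh a)) =
      (1-q)*((Real.exp x - 1) * (1 - Real.exp (-(q*x)))) := by
    rw [Real.cosh_eq, Real.cosh_eq, Real.exp_neg a, Real.exp_neg b, hxab, hqx]
    field_simp
    ring
  rw [hL, hR] at key2
  exact key2

set_option maxHeartbeats 1000000 in
private lemma core_ineq_s8 (q s T P g : ℝ) (hq0 : 0 < q) (hq1 : q < 1) (_hs : 0 < s)
    (hT1 : 1 ≤ T) (hP0 : 0 < P) (hP1 : P ≤ 1) (_hg1 : 1 ≤ g)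
    (hTP : T * P = g^2)
    (hbern : q*(T-1) ≤ T*(1-P))
    (hclaim : 4*q*(g-1)^2 ≤ (1-q)*((T-1)*(1-P))) :
    4*q/(1-q)/6 * (s*g-1)^2 ≤
      (T-1)*(1-s^2*P) + (4*q/(1-q) + 9/q)*(s-1)^2*(g^2+1) := by
  have hT0 : (0:ℝ) < T := lt_of_lt_of_le one_pos hT1
  have hD : (0:ℝ) ≤ (s-1)^2 := sq_nonneg _
  have hA : (0:ℝ) ≤ (T-1)*(1-P) := mul_nonneg (by linarith) (by linarith)
  have step1 : (s*g-1)^2 ≤ 2*(g^2*(s-1)^2) + 2*(g-1)^2 := by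
    nlinarith [sq_nonneg (g*(s-1) - (g-1))]
  have s2a : 4*(q*(T*((T-1)*(P*(s-1))))) ≤ q^2*(T-1)^2 + 4*((T*P)^2*(s-1)^2) := by
    linarith [sq_nonneg (q*(T-1) - 2*(T*(P*(s-1))))]
  have s2b : q^2*(T-1)^2 ≤ q*(T*((T-1)*(1-P))) := by
    have := mul_le_mul_of_nonneg_left hbern (mul_nonneg hq0.le (by linarith : (0:ℝ) ≤ T-1))
    linarith
  have hTPle : T*P ≤ T := by
    have := mul_le_mul_of_nonneg_left hP1 hT0.le
    linarith
  have s2c : (T*P)^2*(s-1)^2 ≤ T*((g^2+1)*(s-1)^2) := by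
    have e : (T*P)^2 = g^2*(T*P) := by rw [sq, hTP]
    have h1 : (T*P)^2 ≤ T*(g^2+1) := by
      have h2 := mul_le_mul_of_nonneg_left hTPle (sq_nonneg g)
      nlinarith [hT0.le]
    have := mul_le_mul_of_nonneg_right h1 hD
    linarith
  have step2 : 4*(q*(T*((T-1)*(P*(s-1))))) ≤
      q*(T*((T-1)*(1-P))) + 4*(T*((g^2+1)*(s-1)^2)) := by linarith
  have f1 : 4*q^2*T*(s*g-1)^2 ≤ 8*q^2*T*(g^2*(s-1)^2) + 8*q^2*T*(g-1)^2 := by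
    have := mul_le_mul_of_nonneg_left step1 (by positivity : (0:ℝ) ≤ 4*q^2*T)
    linarith
  have f2 : 8*q^2*T*(g-1)^2 ≤ 2*q*T*((1-q)*((T-1)*(1-P))) := by
    have := mul_le_mul_of_nonneg_left hclaim (by positivity : (0:ℝ) ≤ 2*q*T)
    linarith
  have f3 : 12*q*(1-q)*(T*((T-1)*(P*(s-1)))) ≤
      3*(1-q)*(q*(T*((T-1)*(1-P)))) + 3*(1-q)*(4*(T*((g^2+1)*(s-1)^2))) := by
    have := mul_le_mul_of_nonneg_left step2 (by linarith : (0:ℝ) ≤ 3*(1-q))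
    linarith
  have hTP' : (T-1)*P = g^2 - P := by rw [sub_mul, hTP, one_mul]
  have hY : (T-1)*P*(s-1)^2 ≤ (g^2+1)*(s-1)^2 := by
    have h2 := mul_nonneg (by linarith : (0:ℝ) ≤ 1 + P) hD
    have hY' : (T-1)*P*(s-1)^2 = (g^2-P)*(s-1)^2 := by rw [hTP']
    nlinarith [h2, hY']
  have h6qT : (0:ℝ) ≤ 6*q*(1-q)*T :=
    mul_nonneg (mul_nonneg (by linarith) (by linarith)) hT0.le
  have f4 : 6*q*(1-q)*T*((T-1)*P*(s-1)^2) ≤ 6*q*(1-q)*T*((g^2+1)*(s-1)^2) :=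
    mul_le_mul_of_nonneg_left hY h6qT
  have f5 : 8*q^2*T*(g^2*(s-1)^2) ≤ 8*q^2*T*((g^2+1)*(s-1)^2) := by
    have h0 : (0:ℝ) ≤ 8*q^2*T*(s-1)^2 := mul_nonneg (by positivity) hD
    linarith [h0]
  have c1 : (0:ℝ) ≤ (16*q^2 + 42*(1-q) - 6*q*(1-q)) * (T*((g^2+1)*(s-1)^2)) := by
    apply mul_nonneg
    · nlinarith
    · exact mul_nonneg hT0.le (mul_nonneg (by positivity) hD)
  have c2 : (0:ℝ) ≤ (q*(1-q))*(T*((T-1)*(1-P))) := by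
    apply mul_nonneg (mul_nonneg hq0.le (by linarith))
    exact mul_nonneg hT0.le hA
  have key : 4*q^2*T*(s*g-1)^2 ≤
      6*q*(1-q)*T*((T-1)*(1-s^2*P)) + (24*q^2+54*(1-q))*(T*((g^2+1)*(s-1)^2)) := by
    have hid : 6*q*(1-q)*T*((T-1)*(1-s^2*P)) =
        6*q*(1-q)*T*((T-1)*(1-P)) - 6*q*(1-q)*T*((T-1)*P*(s-1)^2)
          - 12*q*(1-q)*(T*((T-1)*(P*(s-1)))) := by ring
    rw [hid]
    linarith [f1, f2, f3, f4, f5, c1, c2]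
  have hden : (0:ℝ) < 6*q*(1-q)*T :=
    mul_pos (mul_pos (by linarith) (by linarith)) hT0
  have hq' : q ≠ 0 := ne_of_gt hq0
  have h1q' : (1:ℝ) - q ≠ 0 := by intro h; linarith [h]
  have hT' : T ≠ 0 := ne_of_gt hT0
  calc 4*q/(1-q)/6 * (s*g-1)^2
      = (4*q^2*T*(s*g-1)^2) / (6*q*(1-q)*T) := by field_simp
    _ ≤ (6*q*(1-q)*T*((T-1)*(1-s^2*P)) + (24*q^2+54*(1-q))*(T*((g^2+1)*(s-1)^2))) /
        (6*q*(1-q)*T) := (div_le_div_iff_of_pos_right hden).mpr key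
    _ = (T-1)*(1-s^2*P) + (4*q/(1-q) + 9/q)*(s-1)^2*(g^2+1) := by
        field_simp; ring

/-- **Reformulated algebraic inequality** (inequality (3.5) in the proof of Lemma 3.3(ii)):
for `q ∈ (0,1)`, `t ≥ 1`, `s > 0` and `λ = s² t^{−q}`:
`ζ₁(q)(√(λt) − 1)² ≤ (t−1)(1−λ) + ζ₂(q)(s−1)²(t^{1−q}+1)`,
where `ζ(q) = 4q/(1−q)`, `ζ₁(q) = ζ(q)/6`, `ζ₂(q) = ζ(q) + 9/q`. -/
theorem alg_ineq_reformulated (q t s : ℝ) (hq : q ∈ Ioo (0:ℝ) 1) (ht : 1 ≤ t) (hs : 0 < s) :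
    4 * q / (1 - q) / 6 * (Real.sqrt (s ^ 2 * t ^ (-q) * t) - 1) ^ 2 ≤
      (t - 1) * (1 - s ^ 2 * t ^ (-q)) +
        (4 * q / (1 - q) + 9 / q) * (s - 1) ^ 2 * (t ^ (1 - q) + 1) := by
  obtain ⟨hq0, hq1⟩ := hq
  have ht0 : 0 < t := lt_of_lt_of_le one_pos ht
  obtain ⟨x, rfl⟩ : ∃ x, t = Real.exp x := ⟨Real.log t, (Real.exp_log ht0).symm⟩
  have hx : 0 ≤ x := by
    have h := Real.log_nonneg ht
    rwa [Real.log_exp] at h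
  have hPt : (Real.exp x) ^ (-q) = Real.exp (-(q*x)) := by
    rw [show -(q*x) = x * (-q) by ring, Real.exp_mul]
  have h1qt : (Real.exp x) ^ (1-q) = (Real.exp ((1-q)*x/2))^2 := by
    rw [← Real.exp_mul, sq, ← Real.exp_add]
    congr 1; ring
  have harg : s^2 * (Real.exp x)^(-q) * Real.exp x = (s * Real.exp ((1-q)*x/2))^2 := by
    rw [hPt]
    have h2 : Real.exp (-(q*x)) * Real.exp x =
        Real.exp ((1-q)*x/2) * Real.exp ((1-q)*x/2) := by
      rw [← Real.exp_add, ← Real.exp_add]; congr 1; ring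
    linear_combination s^2 * h2
  rw [harg, Real.sqrt_sq (by positivity), hPt, h1qt]
  -- hypotheses for the core inequality
  have hT1 : 1 ≤ Real.exp x := Real.one_le_exp hx
  have hP0 : (0:ℝ) < Real.exp (-(q*x)) := Real.exp_pos _
  have hP1 : Real.exp (-(q*x)) ≤ 1 := Real.exp_le_one_iff.2 (by nlinarith)
  have hg1 : 1 ≤ Real.exp ((1-q)*x/2) :=
    Real.one_le_exp (div_nonneg (mul_nonneg (by linarith) hx) (by norm_num))
  have hTP : Real.exp x * Real.exp (-(q*x)) = (Real.exp ((1-q)*x/2))^2 := by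
    rw [sq, ← Real.exp_add, ← Real.exp_add]; congr 1; ring
  have hconv := convexOn_exp.2 (Set.mem_univ (-x)) (Set.mem_univ (0:ℝ)) hq0.le
    (by linarith : (0:ℝ) ≤ 1-q) (by ring)
  simp only [smul_eq_mul, mul_zero, add_zero, Real.exp_zero, mul_one] at hconv
  rw [show q * -x = -(q*x) by ring] at hconv
  have hbern : q*(Real.exp x - 1) ≤ Real.exp x*(1 - Real.exp (-(q*x))) := by
    have h2 : Real.exp (-x) * Real.exp x = 1 := by rw [← Real.exp_add]; simp
    have h3 := mul_le_mul_of_nonneg_left hconv (Real.exp_pos x).le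
    nlinarith [h2, h3]
  have hclaim := claim1_exp q x hq0 hq1 hx
  exact core_ineq_s8 q s (Real.exp x) (Real.exp (-(q*x))) (Real.exp ((1-q)*x/2))
    hq0 hq1 hs hT1 hP0 hP1 hg1 hTP hbern hclaim
end

section
/- Logarithmic computation rule for the nonlocal form: Let k_t : ℝ^d × ℝ^d → [0,∞) be measurable and symmetric for each t in an interval I, and let ψ : ℝ^d → [0,∞) be continuous with support equal to the closed ball cl(B_R) for some R > 0, ψ > 0 on B_R, and sup_{t∈I} E_t(ψ,ψ) < ∞. Then for every function w : I × ℝ^d → [0,∞) with w(t,·) > 0 on B_R, and for every t ∈ I at which all the integrals below are finite: E_t(w, −ψ² w⁻¹) ≥ ∬_{B_R × B_R} ψ(x)ψ(y) ( log(w(t,y)/ψ(y)) − log(w(t,x)/ψ(x)) )² k_t(x,y) dx dy − 3 E_t(ψ,ψ). -/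
open MeasureTheory Real Set Metric

noncomputable section

abbrev Ed (d : ℕ) : Type := EuclideanSpace ℝ (Fin d)

private lemma sq_log_le (r : ℝ) (hr : 0 < r) : (Real.log r)^2 ≤ r + r⁻¹ - 2 := by
  set u := Real.log r with hu
  have hre : r = Real.exp u := (Real.exp_log hr).symm
  have h1 : |u|/2 ≤ Real.sinh (|u|/2) := Real.self_le_sinh_iff.mpr (by positivity)
  have h2 : Real.sinh (|u|/2) = |Real.sinh (u/2)| := by
    rcases abs_cases u with ⟨h, h'⟩ | ⟨h, h'⟩
    · rw [h, abs_of_nonneg (Real.sinh_nonneg_iff.mpr (by linarith))]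
    · rw [h, abs_of_nonpos (Real.sinh_nonpos_iff.mpr (by linarith))]
      rw [neg_div, Real.sinh_neg]
  have h3 : u^2 ≤ 4 * Real.sinh (u/2)^2 := by
    have := h1
    rw [h2] at this
    have h4 : |u|^2 ≤ (2 * |Real.sinh (u/2)|)^2 := by nlinarith [abs_nonneg u]
    calc u^2 = |u|^2 := (sq_abs u).symm
    _ ≤ (2*|Real.sinh (u/2)|)^2 := h4
    _ = 4 * Real.sinh (u/2)^2 := by rw [mul_pow, sq_abs]; ring
  have h5 : 4 * Real.sinh (u/2)^2 = r + r⁻¹ - 2 := by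
    rw [Real.sinh_eq]
    have e1 : Real.exp (u/2) * Real.exp (u/2) = r := by rw [← Real.exp_add, hre]; ring_nf
    have e2 : Real.exp (-(u/2)) * Real.exp (-(u/2)) = r⁻¹ := by
      rw [← Real.exp_add, hre, ← Real.exp_neg]; ring_nf
    have e3 : Real.exp (u/2) * Real.exp (-(u/2)) = 1 := by rw [← Real.exp_add]; simp
    nlinarith [e1, e2, e3]
  linarith

private lemma pw1 (a b p q : ℝ) (ha : 0 < a) (hb : 0 < b) (hp : 0 < p) (hq : 0 < q) :
    p * q * (Real.log (b/q) - Real.log (a/p))^2 ≤ (b - a) * (p^2/a - q^2/b) + 3*(q-p)^2 := by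
  have hr : 0 < b*p/(a*q) := by positivity
  have hlog : Real.log (b/q) - Real.log (a/p) = Real.log (b*p/(a*q)) := by
    rw [Real.log_div hb.ne' hq.ne', Real.log_div ha.ne' hp.ne',
      Real.log_div (by positivity : (0:ℝ) < b*p).ne' (by positivity : (0:ℝ) < a*q).ne',
      Real.log_mul hb.ne' hp.ne', Real.log_mul ha.ne' hq.ne']
    ring
  rw [hlog]
  have key := sq_log_le _ hr
  have hid : p*q*((b*p/(a*q)) + (b*p/(a*q))⁻¹ - 2) = (b-a)*(p^2/a - q^2/b) + (p-q)^2 := by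
    field_simp
    ring
  nlinarith [sq_nonneg (q-p), mul_pos hp hq,
    mul_le_mul_of_nonneg_left key (mul_pos hp hq).le]

private lemma pw0 (a b p q : ℝ) (ha : 0 ≤ a) (hb : 0 ≤ b)
    (hpa : p ≠ 0 → 0 < a) (hqb : q ≠ 0 → 0 < b) (hpq : p = 0 ∨ q = 0) :
    0 ≤ (b - a) * (p^2/a - q^2/b) + 3*(q-p)^2 := by
  rcases hpq with h | h
  · subst h
    rcases eq_or_ne q 0 with h | h
    · simp [h]
    · have hb' := hqb h
      have : (b - a) * ((0:ℝ)^2/a - q^2/b) = a*q^2/b - q^2 := by field_simp; ring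
      rw [this]
      have : 0 ≤ a*q^2/b := by positivity
      nlinarith [sq_nonneg q]
  · subst h
    rcases eq_or_ne p 0 with h | h
    · simp [h]
    · have ha' := hpa h
      have : (b - a) * (p^2/a - (0:ℝ)^2/b) = b*p^2/a - p^2 := by field_simp; ring
      rw [this]
      have : 0 ≤ b*p^2/a := by positivity
      nlinarith [sq_nonneg p]

/-- **Logarithmic computation rule for the nonlocal form** (Lemma 4.1): writing
`E_t(u,v) = ∬ (u(t,y)−u(t,x))(v(t,y)−v(t,x)) k_t(x,y)`, for a measurable symmetric
nonnegative kernel, a continuous nonnegative `ψ` with support `cl(B_R)` and positive on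
`B_R`, with `sup_{t∈I} E_t(ψ,ψ) < ∞`, and `w ≥ 0` with `w(t,·) > 0` on `B_R`:
`E_t(w, −ψ²w⁻¹) ≥ ∬_{B_R×B_R} ψ(x)ψ(y)(log(w(t,y)/ψ(y)) − log(w(t,x)/ψ(x)))² k_t(x,y)
 − 3 E_t(ψ,ψ)` at every `t ∈ I` where all the integrals involved are finite. -/
theorem log_computation_rule (d : ℕ) (R : ℝ) (hR : 0 < R) (I : Set ℝ)
    (k : ℝ → Ed d → Ed d → ℝ)
    (hk_meas : ∀ t, Measurable (Function.uncurry (k t)))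
    (hk_symm : ∀ t x y, k t x y = k t y x)
    (hk_nonneg : ∀ t x y, 0 ≤ k t x y)
    (ψ : Ed d → ℝ) (hψ_cont : Continuous ψ) (hψ_nonneg : ∀ x, 0 ≤ ψ x)
    (hψ_supp : tsupport ψ = closedBall (0 : Ed d) R)
    (hψ_pos : ∀ x ∈ ball (0 : Ed d) R, 0 < ψ x)
    (hψ_energy : ∃ M : ℝ, ∀ t ∈ I,
      Integrable (fun p : Ed d × Ed d => (ψ p.2 - ψ p.1) ^ 2 * k t p.1 p.2) ∧
      (∫ x, ∫ y, (ψ y - ψ x) ^ 2 * k t x y) ≤ M)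
    (w : ℝ → Ed d → ℝ)
    (hw_nonneg : ∀ t ∈ I, ∀ x, 0 ≤ w t x)
    (hw_pos : ∀ t ∈ I, ∀ x ∈ ball (0 : Ed d) R, 0 < w t x)
    (t : ℝ) (ht : t ∈ I)
    (hint₁ : Integrable (fun p : Ed d × Ed d =>
      (w t p.2 - w t p.1) * (ψ p.1 ^ 2 / w t p.1 - ψ p.2 ^ 2 / w t p.2) * k t p.1 p.2))
    (hint₂ : IntegrableOn (fun p : Ed d × Ed d =>
      ψ p.1 * ψ p.2 * (Real.log (w t p.2 / ψ p.2) - Real.log (w t p.1 / ψ p.1)) ^ 2 *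
        k t p.1 p.2) (ball (0 : Ed d) R ×ˢ ball (0 : Ed d) R)) :
    (∫ x in ball (0 : Ed d) R, ∫ y in ball (0 : Ed d) R,
        ψ x * ψ y * (Real.log (w t y / ψ y) - Real.log (w t x / ψ x)) ^ 2 * k t x y)
      - 3 * (∫ x, ∫ y, (ψ y - ψ x) ^ 2 * k t x y) ≤
    ∫ x, ∫ y, (w t y - w t x) * (ψ x ^ 2 / w t x - ψ y ^ 2 / w t y) * k t x y := by
  obtain ⟨M, hM⟩ := hψ_energy
  obtain ⟨hG2int, -⟩ := hM t ht
  set B : Set (Ed d) := ball (0 : Ed d) R with hB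
  have hBm : MeasurableSet B := measurableSet_ball
  -- support fact
  have hsupp : ∀ x, ψ x ≠ 0 → x ∈ B := by
    intro x hx
    have hopen : IsOpen (Function.support ψ) := by
      rw [Function.support_eq_preimage]
      exact isOpen_compl_singleton.preimage hψ_cont
    have hsub : Function.support ψ ⊆ closedBall (0 : Ed d) R := by
      rw [← hψ_supp]; exact subset_tsupport ψ
    have := interior_maximal hsub hopen
    rw [interior_closedBall (0 : Ed d) hR.ne'] at this
    exact this hx
  set F : Ed d × Ed d → ℝ := fun p =>
    (w t p.2 - w t p.1) * (ψ p.1 ^ 2 / w t p.1 - ψ p.2 ^ 2 / w t p.2) * k t p.1 p.2 with hF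
  set G : Ed d × Ed d → ℝ := fun p =>
    ψ p.1 * ψ p.2 * (Real.log (w t p.2 / ψ p.2) - Real.log (w t p.1 / ψ p.1)) ^ 2 *
      k t p.1 p.2 with hG
  set G2 : Ed d × Ed d → ℝ := fun p => (ψ p.2 - ψ p.1) ^ 2 * k t p.1 p.2 with hG2
  have hGind : Integrable ((B ×ˢ B).indicator G) :=
    (integrable_indicator_iff (hBm.prod hBm)).mpr hint₂
  have hpt : ∀ p : Ed d × Ed d, (B ×ˢ B).indicator G p ≤ F p + 3 * G2 p := by
    rintro ⟨x, y⟩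
    have hk := hk_nonneg t x y
    by_cases hxy : (x, y) ∈ B ×ˢ B
    · rw [Set.indicator_of_mem hxy]
      obtain ⟨hx, hy⟩ := hxy
      have h1 := pw1 (w t x) (w t y) (ψ x) (ψ y) (hw_pos t ht x hx) (hw_pos t ht y hy)
        (hψ_pos x hx) (hψ_pos y hy)
      have h2 := mul_le_mul_of_nonneg_right h1 hk
      calc G (x, y) = ψ x * ψ y *
            (Real.log (w t y / ψ y) - Real.log (w t x / ψ x)) ^ 2 * k t x y := rfl
        _ ≤ ((w t y - w t x) * (ψ x ^ 2 / w t x - ψ y ^ 2 / w t y) +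
              3 * (ψ y - ψ x) ^ 2) * k t x y := h2
        _ = F (x, y) + 3 * G2 (x, y) := by simp only [hF, hG2]; ring
    · rw [Set.indicator_of_notMem hxy]
      have hpq : ψ x = 0 ∨ ψ y = 0 := by
        by_contra h
        push_neg at h
        exact hxy ⟨hsupp x h.1, hsupp y h.2⟩
      have h0 := pw0 (w t x) (w t y) (ψ x) (ψ y) (hw_nonneg t ht x) (hw_nonneg t ht y)
        (fun h => hw_pos t ht x (hsupp x h)) (fun h => hw_pos t ht y (hsupp y h)) hpq
      have h2 := mul_nonneg h0 hk
      calc (0:ℝ) ≤ ((w t y - w t x) * (ψ x ^ 2 / w t x - ψ y ^ 2 / w t y) +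
              3 * (ψ y - ψ x) ^ 2) * k t x y := h2
        _ = F (x, y) + 3 * G2 (x, y) := by simp only [hF, hG2]; ring
  have hmono : ∫ p, (B ×ˢ B).indicator G p ≤ ∫ p, (F p + 3 * G2 p) :=
    integral_mono hGind (hint₁.add (hG2int.const_mul 3)) hpt
  have hadd : ∫ p, (F p + 3 * G2 p) = (∫ p, F p) + 3 * ∫ p, G2 p := by
    rw [integral_add hint₁ (hG2int.const_mul 3), integral_const_mul]
  have hvol : (volume : Measure (Ed d × Ed d)) = (volume : Measure (Ed d)).prod volume :=
    Measure.volume_eq_prod _ _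
  have eG : ∫ p, (B ×ˢ B).indicator G p = ∫ x in B, ∫ y in B,
      ψ x * ψ y * (Real.log (w t y / ψ y) - Real.log (w t x / ψ x)) ^ 2 * k t x y := by
    rw [integral_indicator (hBm.prod hBm), hvol]
    exact setIntegral_prod G (by rwa [← hvol])
  have eF : ∫ p, F p = ∫ x, ∫ y,
      (w t y - w t x) * (ψ x ^ 2 / w t x - ψ y ^ 2 / w t y) * k t x y := by
    rw [hvol]; exact integral_prod F (by rwa [← hvol])
  have eG2 : ∫ p, G2 p = ∫ x, ∫ y, (ψ y - ψ x) ^ 2 * k t x y := by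
    rw [hvol]; exact integral_prod G2 (by rwa [← hvol])
  rw [hadd, eG, eF, eG2] at hmono
  linarith
end
end
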